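/- arXiv:1606.08220 — 2 statements merged into one kernel-verified Lean document; each statement's English description precedes it below -/
import Mathlib

section
/- (Lemma A.3, bound on û_e.) Let n ≥ 2, Q = diag(q_1,…,q_n) with q_i > 0, L_c the Laplacian of a connected undirected graph, Q̄ := Q^{-1}𝟙𝟙ᵀQ^{-1}/(𝟙ᵀQ^{-1}𝟙) − Q^{-1}, Φ := −L_cQ + (1/n)𝟙𝟙ᵀ, γ > 0, 0 < θ < 1 with γ‖Φ^{-1}Q̄‖ ≤ θ, and d̃ ∈ ℝ^n. Let B⁺ ∈ ℝ^{m×n} be a matrix such that B(B⁺v) = v for every v ∈ ℝ^n with 𝟙ᵀv = 0 (a generalized inverse of the incidence matrix B on Im(B) = span{𝟙}^⊥), and let ū_e, u_e^+ ∈ ℝ^m satisfy 0 < ū_e < u_e^+ componentwise. Define û_e := −γ B⁺ (γQ̄ + Φ)^{-1} Q̄² Q d̃ and δ_e := min{ min_i (u_e^+ − ū_e)_i , min_j (ū_e)_j } / ‖B⁺‖ (with δ_e := +∞ if B⁺ = 0). If γ ‖Φ^{-1} Q̄² Q d̃‖ < (1 − θ) δ_e, then ‖û_e‖ < min{ min_i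 (u_e^+ − ū_e)_i , min_j (ū_e)_j }. -/
open Matrix Filter

/-- Euclidean norm on `Fin k → ℝ`. -/
noncomputable def euclNorm {k : ℕ} (v : Fin k → ℝ) : ℝ :=
  ‖(WithLp.equiv 2 (Fin k → ℝ)).symm v‖

/-- Operator norm on matrices induced by the Euclidean norms. -/
noncomputable def matOpNorm {k l : ℕ} (A : Matrix (Fin k) (Fin l) ℝ) : ℝ :=
  ‖LinearMap.toContinuousLinearMap (Matrix.toEuclideanLin A)‖

/-- The all-ones vector `𝟙`. -/
def onesVec (k : ℕ) : Fin k → ℝ := fun _ => 1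

/-- The all-ones matrix `𝟙𝟙ᵀ`. -/
def onesMat (k : ℕ) : Matrix (Fin k) (Fin k) ℝ := Matrix.of fun _ _ => 1

/-- Scalar saturation: `sat(y; l, u) = l` if `y ≤ l`, `u` if `u ≤ y`, and `y` otherwise. -/
noncomputable def sat1 (y l u : ℝ) : ℝ := if y ≤ l then l else if u ≤ y then u else y

/-- Componentwise (multidimensional) saturation function. -/
noncomputable def satv {k : ℕ} (x xm xp : Fin k → ℝ) : Fin k → ℝ :=
  fun i => sat1 (x i) (xm i) (xp i)

/-! ### Auxiliary lemmas -/

lemma euclNorm_nonneg' {k : ℕ} (v : Fin k → ℝ) : 0 ≤ euclNorm v := norm_nonneg _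

lemma euclNorm_zero' {k : ℕ} : euclNorm (0 : Fin k → ℝ) = 0 := by simp [euclNorm]

lemma euclNorm_smul' {k : ℕ} (c : ℝ) (v : Fin k → ℝ) :
    euclNorm (c • v) = |c| * euclNorm v := by
  simp [euclNorm, norm_smul, Real.norm_eq_abs]

lemma euclNorm_neg' {k : ℕ} (v : Fin k → ℝ) : euclNorm (-v) = euclNorm v := by
  simp [euclNorm]

lemma euclNorm_sub_le' {k : ℕ} (v w : Fin k → ℝ) :
    euclNorm (v - w) ≤ euclNorm v + euclNorm w := by
  simpa [euclNorm] using
    norm_sub_le ((WithLp.equiv 2 (Fin k → ℝ)).symm v) ((WithLp.equiv 2 (Fin k → ℝ)).symm w)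

lemma euclNorm_mulVec_le' {k l : ℕ} (A : Matrix (Fin k) (Fin l) ℝ) (x : Fin l → ℝ) :
    euclNorm (A *ᵥ x) ≤ matOpNorm A * euclNorm x := by
  have := (LinearMap.toContinuousLinearMap (Matrix.toEuclideanLin A)).le_opNorm
    ((WithLp.equiv 2 (Fin l → ℝ)).symm x)
  simpa [euclNorm, matOpNorm, Matrix.toEuclideanLin_apply_piLp_toLp] using this

lemma matOpNorm_pos' {k l : ℕ} {A : Matrix (Fin k) (Fin l) ℝ} (hA : A ≠ 0) :
    0 < matOpNorm A := by
  rcases lt_or_eq_of_le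
      (norm_nonneg (LinearMap.toContinuousLinearMap (Matrix.toEuclideanLin A))) with h | h
  · exact h
  · exfalso
    apply hA
    have h0 : LinearMap.toContinuousLinearMap (Matrix.toEuclideanLin A) = 0 := by
      rwa [eq_comm, ContinuousLinearMap.opNorm_zero_iff] at h
    have : Matrix.toEuclideanLin A = 0 := by
      apply LinearMap.ext
      intro v
      have := congrArg (fun f => f v) (congrArg (ContinuousLinearMap.toLinearMap) h0)
      simpa using this
    simpa using Matrix.toEuclideanLin.injective (by simpa using this)

lemma det_isUnit_of_ker' {n : ℕ} (A : Matrix (Fin n) (Fin n) ℝ)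
    (h : ∀ x, A *ᵥ x = 0 → x = 0) : IsUnit A.det := by
  rw [isUnit_iff_ne_zero]
  intro hdet
  obtain ⟨v, hv, hv0⟩ := Matrix.exists_mulVec_eq_zero_iff.mpr hdet
  exact hv (h v hv0)

lemma onesVec_dot' {k : ℕ} (x : Fin k → ℝ) : onesVec k ⬝ᵥ x = ∑ i, x i := by
  simp [onesVec, dotProduct]

lemma onesMat_mulVec' {k : ℕ} (x : Fin k → ℝ) :
    onesMat k *ᵥ x = fun _ => ∑ j, x j := by
  funext i; simp [onesMat, Matrix.mulVec, dotProduct]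

lemma diag_mulVec' {k : ℕ} (d x : Fin k → ℝ) :
    Matrix.diagonal d *ᵥ x = fun i => d i * x i := by
  funext i; simp [Matrix.mulVec_diagonal]

lemma ones_dot_Lc' {n : ℕ} {Lc : Matrix (Fin n) (Fin n) ℝ} (hsymm : Lc.IsSymm)
    (hLc1 : Lc *ᵥ onesVec n = 0) (y : Fin n → ℝ) :
    onesVec n ⬝ᵥ (Lc *ᵥ y) = 0 := by
  rw [dotProduct_mulVec, ← Matrix.mulVec_transpose, hsymm.eq, hLc1]
  simp

lemma laplacian_psd' {n : ℕ} (L : Matrix (Fin n) (Fin n) ℝ) (hsymm : L.IsSymm)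
    (hoff : ∀ i j, i ≠ j → L i j ≤ 0) (hL1 : L *ᵥ onesVec n = 0)
    (y : Fin n → ℝ) : 0 ≤ y ⬝ᵥ (L *ᵥ y) := by
  have hrow : ∀ i, ∑ j, L i j = 0 := by
    intro i
    have := congrFun hL1 i
    simpa [Matrix.mulVec, dotProduct, onesVec] using this
  have hcol : ∀ j, ∑ i, L i j = 0 := by
    intro j
    calc ∑ i, L i j = ∑ i, L j i := by
          refine Finset.sum_congr rfl fun i _ => ?_
          exact (congrFun (congrFun hsymm j) i).symm ▸ rfl
      _ = 0 := hrow j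
  have key : ∑ i, ∑ j, L i j * (y i - y j)^2 = -2 * (y ⬝ᵥ (L *ᵥ y)) := by
    have expand : ∀ i j, L i j * (y i - y j)^2
        = L i j * (y i)^2 - 2 * (L i j * (y i * y j)) + L i j * (y j)^2 := by
      intro i j; ring
    simp only [expand, Finset.sum_add_distrib, Finset.sum_sub_distrib]
    have h1 : ∑ i, ∑ j, L i j * (y i)^2 = 0 := by
      refine Finset.sum_eq_zero fun i _ => ?_
      rw [← Finset.sum_mul, hrow i]; ring
    have h2 : ∑ i, ∑ j, L i j * (y j)^2 = 0 := by
      rw [Finset.sum_comm]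
      refine Finset.sum_eq_zero fun j _ => ?_
      rw [← Finset.sum_mul, hcol j]; ring
    have h3 : ∑ i, ∑ j, 2 * (L i j * (y i * y j)) = 2 * (y ⬝ᵥ (L *ᵥ y)) := by
      simp only [Matrix.mulVec, dotProduct, Finset.mul_sum]
      refine Finset.sum_congr rfl fun i _ => Finset.sum_congr rfl fun j _ => ?_
      ring
    rw [h1, h2, h3]; ring
  have hnonpos : ∑ i, ∑ j, L i j * (y i - y j)^2 ≤ 0 := by
    refine Finset.sum_nonpos fun i _ => Finset.sum_nonpos fun j _ => ?_
    rcases eq_or_ne i j with rfl | hij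
    · simp
    · exact mul_nonpos_of_nonpos_of_nonneg (hoff i j hij) (sq_nonneg _)
  nlinarith [key, hnonpos]

lemma sum_inv_pos' {n : ℕ} (hn : 2 ≤ n) (q : Fin n → ℝ) (hq : ∀ i, 0 < q i) :
    0 < ∑ i, (q i)⁻¹ := by
  have : Nonempty (Fin n) := ⟨⟨0, by omega⟩⟩
  exact Finset.sum_pos (fun i _ => inv_pos.mpr (hq i)) Finset.univ_nonempty

lemma ones_dot_Qbar' {n : ℕ} (hn : 2 ≤ n) (q : Fin n → ℝ) (hq : ∀ i, 0 < q i)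
    (y : Fin n → ℝ) :
    onesVec n ⬝ᵥ (((∑ i, (q i)⁻¹)⁻¹ • (Matrix.diagonal (fun i => (q i)⁻¹) * onesMat n *
        Matrix.diagonal (fun i => (q i)⁻¹)) - Matrix.diagonal (fun i => (q i)⁻¹)) *ᵥ y) = 0 := by
  have hs := sum_inv_pos' hn q hq
  rw [Matrix.sub_mulVec, Matrix.smul_mulVec]
  rw [show (Matrix.diagonal (fun i => (q i)⁻¹) * onesMat n * Matrix.diagonal (fun i => (q i)⁻¹)) *ᵥ y
      = Matrix.diagonal (fun i => (q i)⁻¹) *ᵥ (onesMat n *ᵥ (Matrix.diagonal (fun i => (q i)⁻¹) *ᵥ y))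
      by rw [Matrix.mulVec_mulVec, Matrix.mulVec_mulVec]]
  rw [dotProduct_sub, dotProduct_smul]
  rw [diag_mulVec', onesMat_mulVec', diag_mulVec', onesVec_dot', onesVec_dot']
  simp only [smul_eq_mul]
  rw [← Finset.sum_mul]
  rw [inv_mul_cancel_left₀ hs.ne', sub_self]

lemma phi_ker' {n : ℕ} (hn : 2 ≤ n) (q : Fin n → ℝ) (hq : ∀ i, 0 < q i)
    (Lc : Matrix (Fin n) (Fin n) ℝ) (hsymm : Lc.IsSymm)
    (hLc1 : Lc *ᵥ onesVec n = 0)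
    (hker : LinearMap.ker Lc.mulVecLin = Submodule.span ℝ {onesVec n})
    (x : Fin n → ℝ)
    (hx : (-(Lc * Matrix.diagonal q) + (n : ℝ)⁻¹ • onesMat n) *ᵥ x = 0) : x = 0 := by
  have hn0 : (n : ℝ) ≠ 0 := by positivity
  have hmv : -(Lc *ᵥ (Matrix.diagonal q *ᵥ x)) + (n : ℝ)⁻¹ • (onesMat n *ᵥ x) = 0 := by
    rw [Matrix.mulVec_mulVec]
    rw [← Matrix.neg_mulVec, ← Matrix.smul_mulVec, ← Matrix.add_mulVec]
    exact hx
  have hsum : ∑ i, x i = 0 := by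
    have h1 := congrArg (fun v => onesVec n ⬝ᵥ v) hmv
    simp only [dotProduct_add, dotProduct_neg, dotProduct_smul,
      dotProduct_zero] at h1
    rw [ones_dot_Lc' hsymm hLc1, onesMat_mulVec', onesVec_dot'] at h1
    simp only [neg_zero, zero_add, smul_eq_mul, Finset.sum_const, Finset.card_univ,
      Fintype.card_fin, nsmul_eq_mul] at h1
    have : (n : ℝ)⁻¹ * ((n : ℝ) * ∑ j, x j) = ∑ j, x j := by
      rw [inv_mul_cancel_left₀ hn0]
    rw [this] at h1
    exact h1
  have honem : onesMat n *ᵥ x = 0 := by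
    rw [onesMat_mulVec']; funext i; simp [hsum]
  have hLQ : Lc *ᵥ (Matrix.diagonal q *ᵥ x) = 0 := by
    rw [honem] at hmv
    simpa using hmv
  have hmem : Matrix.diagonal q *ᵥ x ∈ LinearMap.ker Lc.mulVecLin := by
    simpa [LinearMap.mem_ker, Matrix.mulVecLin_apply] using hLQ
  rw [hker, Submodule.mem_span_singleton] at hmem
  obtain ⟨c, hc⟩ := hmem
  have hxc : ∀ i, x i = c * (q i)⁻¹ := by
    intro i
    have := congrFun hc i
    simp only [Pi.smul_apply, onesVec, smul_eq_mul, mul_one, diag_mulVec'] at this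
    have hqi := (hq i).ne'
    field_simp
    rw [this]
    ring
  have hc0 : c = 0 := by
    have : ∑ i, x i = c * ∑ i, (q i)⁻¹ := by
      rw [Finset.mul_sum]
      exact Finset.sum_congr rfl fun i _ => hxc i
    rw [hsum] at this
    have hs := sum_inv_pos' hn q hq
    rcases mul_eq_zero.mp this.symm with h | h
    · exact h
    · exact absurd h hs.ne'
  funext i
  rw [hxc i, hc0, zero_mul]
  rfl

lemma K_ker' {n : ℕ} (hn : 2 ≤ n) (q : Fin n → ℝ) (hq : ∀ i, 0 < q i)
    (Lc : Matrix (Fin n) (Fin n) ℝ) (hsymm : Lc.IsSymm)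
    (hoff : ∀ i j, i ≠ j → Lc i j ≤ 0)
    (hLc1 : Lc *ᵥ onesVec n = 0)
    (γ : ℝ) (hγ : 0 < γ) (x : Fin n → ℝ)
    (hx : (γ • ((∑ i, (q i)⁻¹)⁻¹ • (Matrix.diagonal (fun i => (q i)⁻¹) * onesMat n *
        Matrix.diagonal (fun i => (q i)⁻¹)) - Matrix.diagonal (fun i => (q i)⁻¹))
      + (-(Lc * Matrix.diagonal q) + (n : ℝ)⁻¹ • onesMat n)) *ᵥ x = 0) : x = 0 := by
  have hn0 : (n : ℝ) ≠ 0 := by positivity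
  have hs := sum_inv_pos' hn q hq
  set Qb : Matrix (Fin n) (Fin n) ℝ := (∑ i, (q i)⁻¹)⁻¹ •
      (Matrix.diagonal (fun i => (q i)⁻¹) * onesMat n * Matrix.diagonal (fun i => (q i)⁻¹)) -
      Matrix.diagonal (fun i => (q i)⁻¹) with hQb
  have hmv : γ • (Qb *ᵥ x) +
      (-(Lc *ᵥ (Matrix.diagonal q *ᵥ x)) + (n : ℝ)⁻¹ • (onesMat n *ᵥ x)) = 0 := by
    rw [Matrix.mulVec_mulVec, ← Matrix.neg_mulVec, ← Matrix.smul_mulVec (γ),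
      ← Matrix.smul_mulVec ((n : ℝ)⁻¹), ← Matrix.add_mulVec, ← Matrix.add_mulVec]
    exact hx
  have hsum : ∑ i, x i = 0 := by
    have h1 := congrArg (fun v => onesVec n ⬝ᵥ v) hmv
    simp only [dotProduct_add, dotProduct_neg, dotProduct_smul,
      dotProduct_zero] at h1
    rw [ones_dot_Lc' hsymm hLc1, hQb] at h1
    rw [ones_dot_Qbar' hn q hq x] at h1
    rw [onesMat_mulVec', onesVec_dot'] at h1
    simp only [neg_zero, zero_add, smul_eq_mul, mul_zero, Finset.sum_const, Finset.card_univ,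
      Fintype.card_fin, nsmul_eq_mul] at h1
    have : (n : ℝ)⁻¹ * ((n : ℝ) * ∑ j, x j) = ∑ j, x j := by
      rw [inv_mul_cancel_left₀ hn0]
    rw [this] at h1
    exact h1
  have honem : onesMat n *ᵥ x = 0 := by
    rw [onesMat_mulVec']; funext i; simp [hsum]
  have hLQ : Lc *ᵥ (Matrix.diagonal q *ᵥ x) = γ • (Qb *ᵥ x) := by
    rw [honem] at hmv
    have := hmv
    rw [smul_zero, add_zero] at this
    linear_combination (norm := module) -this
  have hquad : 0 ≤ (Matrix.diagonal q *ᵥ x) ⬝ᵥ (Lc *ᵥ (Matrix.diagonal q *ᵥ x)) :=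
    laplacian_psd' Lc hsymm hoff hLc1 _
  have hQbx : (Matrix.diagonal q *ᵥ x) ⬝ᵥ (Qb *ᵥ x) = -∑ i, (x i)^2 := by
    rw [hQb, Matrix.sub_mulVec, Matrix.smul_mulVec]
    rw [show (Matrix.diagonal (fun i => (q i)⁻¹) * onesMat n * Matrix.diagonal (fun i => (q i)⁻¹)) *ᵥ x
        = Matrix.diagonal (fun i => (q i)⁻¹) *ᵥ (onesMat n *ᵥ (Matrix.diagonal (fun i => (q i)⁻¹) *ᵥ x))
        by rw [Matrix.mulVec_mulVec, Matrix.mulVec_mulVec]]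
    rw [dotProduct_sub, dotProduct_smul]
    rw [diag_mulVec', diag_mulVec', onesMat_mulVec', diag_mulVec']
    simp only [dotProduct, smul_eq_mul]
    have e1 : ∀ i : Fin n, q i * x i * ((q i)⁻¹ * (∑ j, (q j)⁻¹ * x j)) =
        x i * (∑ j, (q j)⁻¹ * x j) := by
      intro i
      rw [show q i * x i * ((q i)⁻¹ * (∑ j, (q j)⁻¹ * x j)) =
        (q i * (q i)⁻¹) * (x i * (∑ j, (q j)⁻¹ * x j)) by ring,
        mul_inv_cancel₀ (hq i).ne', one_mul]
    have e2 : ∀ i : Fin n, q i * x i * ((q i)⁻¹ * x i) = (x i)^2 := by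
      intro i
      rw [show q i * x i * ((q i)⁻¹ * x i) = (q i * (q i)⁻¹) * (x i * x i) by ring,
        mul_inv_cancel₀ (hq i).ne', one_mul, sq]
    rw [Finset.sum_congr rfl fun i _ => e1 i, Finset.sum_congr rfl fun i _ => e2 i]
    rw [← Finset.sum_mul, hsum, zero_mul, mul_zero, zero_sub]
  have hdot : (Matrix.diagonal q *ᵥ x) ⬝ᵥ (Lc *ᵥ (Matrix.diagonal q *ᵥ x))
      = γ * (-∑ i, (x i)^2) := by
    rw [hLQ, dotProduct_smul, hQbx]
    simp
  have hfinal : 0 ≤ γ * (-∑ i, (x i)^2) := hdot ▸ hquad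
  have hsq : ∑ i, (x i)^2 ≤ 0 := by nlinarith
  have hzero : ∑ i, (x i)^2 = 0 :=
    le_antisymm hsq (Finset.sum_nonneg fun i _ => sq_nonneg _)
  funext i
  have h1 := (Finset.sum_eq_zero_iff_of_nonneg
    (fun i _ => sq_nonneg (x i))).mp hzero i (Finset.mem_univ i)
  have h2 := pow_eq_zero_iff (n := 2) (by norm_num) |>.mp h1
  simpa using h2

/-- Lemma A.3, bound on `û_e`. The case `δ_e = +∞` (when `B⁺ = 0`)
is encoded by conditioning the gain hypothesis on `B⁺ ≠ 0`. -/
theorem lemmaA3_ue_bound {n m : ℕ} (hn : 2 ≤ n) (hm : 1 ≤ m)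
    (q : Fin n → ℝ) (hq : ∀ i, 0 < q i)
    (Lc : Matrix (Fin n) (Fin n) ℝ) (hsymm : Lc.IsSymm)
    (hoff : ∀ i j, i ≠ j → Lc i j ≤ 0)
    (hLc1 : Lc *ᵥ onesVec n = 0)
    (hker : LinearMap.ker Lc.mulVecLin = Submodule.span ℝ {onesVec n})
    (Q Qinv Qbar Φ : Matrix (Fin n) (Fin n) ℝ)
    (hQ : Q = Matrix.diagonal q)
    (hQinv : Qinv = Matrix.diagonal fun i => (q i)⁻¹)
    (hQbar : Qbar =
      (onesVec n ⬝ᵥ (Qinv *ᵥ onesVec n))⁻¹ • (Qinv * onesMat n * Qinv) - Qinv)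
    (hΦ : Φ = -(Lc * Q) + (n : ℝ)⁻¹ • onesMat n)
    (γ θ : ℝ) (hγ : 0 < γ) (hθ0 : 0 < θ) (hθ1 : θ < 1)
    (hγθ : γ * matOpNorm (Φ⁻¹ * Qbar) ≤ θ)
    (dtil : Fin n → ℝ)
    (B : Matrix (Fin n) (Fin m) ℝ) (Bplus : Matrix (Fin m) (Fin n) ℝ)
    (hBplus : ∀ v : Fin n → ℝ, onesVec n ⬝ᵥ v = 0 → B *ᵥ (Bplus *ᵥ v) = v)
    (ubare uep : Fin m → ℝ)
    (hfease : ∀ i, 0 < ubare i ∧ ubare i < uep i)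
    (uhate : Fin m → ℝ)
    (huhate : uhate =
      -(γ • (Bplus *ᵥ ((γ • Qbar + Φ)⁻¹ *ᵥ ((Qbar * Qbar * Q) *ᵥ dtil)))))
    (hγ_bound : Bplus ≠ 0 →
      γ * euclNorm ((Φ⁻¹ * (Qbar * Qbar * Q)) *ᵥ dtil) <
        (1 - θ) * (min (⨅ i, (uep - ubare) i) (⨅ j, ubare j) / matOpNorm Bplus)) :
    euclNorm uhate < min (⨅ i, (uep - ubare) i) (⨅ j, ubare j) := by
  classical
  have hsinv : onesVec n ⬝ᵥ (Qinv *ᵥ onesVec n) = ∑ i, (q i)⁻¹ := by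
    rw [hQinv, diag_mulVec', onesVec_dot']
    simp [onesVec]
  have hne : Nonempty (Fin m) := ⟨⟨0, hm⟩⟩
  set M := min (⨅ i, (uep - ubare) i) (⨅ j, ubare j) with hMdef
  have hM : 0 < M := by
    have h1 : 0 < ⨅ i, (uep - ubare) i := by
      obtain ⟨i0, hi0⟩ := Finite.exists_min (fun i => (uep - ubare) i)
      have hle : (uep - ubare) i0 ≤ ⨅ i, (uep - ubare) i := le_ciInf hi0
      have hp : 0 < (uep - ubare) i0 := by
        have := hfease i0
        simp only [Pi.sub_apply]
        linarith [this.1, this.2]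
      linarith
    have h2 : 0 < ⨅ j, ubare j := by
      obtain ⟨i0, hi0⟩ := Finite.exists_min ubare
      have hle : ubare i0 ≤ ⨅ j, ubare j := le_ciInf hi0
      linarith [(hfease i0).1]
    exact lt_min h1 h2
  by_cases hB : Bplus = 0
  · rw [huhate, hB]
    simpa [Matrix.zero_mulVec, euclNorm_zero'] using hM
  · -- determinants
    have hΦdet : IsUnit Φ.det := by
      refine det_isUnit_of_ker' Φ fun x hx => ?_
      refine phi_ker' hn q hq Lc hsymm hLc1 hker x ?_
      rw [hΦ, hQ] at hx
      exact hx
    have hKdet : IsUnit (γ • Qbar + Φ).det := by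
      refine det_isUnit_of_ker' _ fun x hx => ?_
      refine K_ker' hn q hq Lc hsymm hoff hLc1 γ hγ x ?_
      rw [hΦ, hQ, hQbar, hsinv, hQinv] at hx
      exact hx
    set K := γ • Qbar + Φ with hK
    set w := (Qbar * Qbar * Q) *ᵥ dtil with hw
    set v := K⁻¹ *ᵥ w with hv
    have hKv : K *ᵥ v = w := by
      rw [hv, Matrix.mulVec_mulVec, Matrix.mul_nonsing_inv _ hKdet, Matrix.one_mulVec]
    have hΦv : Φ *ᵥ v = w - γ • (Qbar *ᵥ v) := by
      have h1 : γ • (Qbar *ᵥ v) + Φ *ᵥ v = w := by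
        rw [← Matrix.smul_mulVec, ← Matrix.add_mulVec]
        exact hKv
      linear_combination (norm := module) h1
    have hvΦ : v = Φ⁻¹ *ᵥ w - γ • ((Φ⁻¹ * Qbar) *ᵥ v) := by
      have h1 : Φ⁻¹ *ᵥ (Φ *ᵥ v) = v := by
        rw [Matrix.mulVec_mulVec, Matrix.nonsing_inv_mul _ hΦdet, Matrix.one_mulVec]
      calc v = Φ⁻¹ *ᵥ (Φ *ᵥ v) := h1.symm
        _ = Φ⁻¹ *ᵥ (w - γ • (Qbar *ᵥ v)) := by rw [hΦv]
        _ = Φ⁻¹ *ᵥ w - γ • ((Φ⁻¹ * Qbar) *ᵥ v) := by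
            rw [Matrix.mulVec_sub, Matrix.mulVec_smul, ← Matrix.mulVec_mulVec]
    have hNv : euclNorm v ≤ euclNorm (Φ⁻¹ *ᵥ w) + θ * euclNorm v := by
      have t1 : euclNorm v ≤ euclNorm (Φ⁻¹ *ᵥ w) + euclNorm (γ • ((Φ⁻¹ * Qbar) *ᵥ v)) := by
        calc euclNorm v = euclNorm (Φ⁻¹ *ᵥ w - γ • ((Φ⁻¹ * Qbar) *ᵥ v)) := by rw [← hvΦ]
          _ ≤ _ := euclNorm_sub_le' _ _
      have t2 : euclNorm (γ • ((Φ⁻¹ * Qbar) *ᵥ v)) ≤ θ * euclNorm v := by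
        rw [euclNorm_smul', abs_of_pos hγ]
        have t3 := euclNorm_mulVec_le' (Φ⁻¹ * Qbar) v
        nlinarith [euclNorm_nonneg' v, euclNorm_nonneg' ((Φ⁻¹ * Qbar) *ᵥ v)]
      linarith
    have hΦw : Φ⁻¹ *ᵥ w = (Φ⁻¹ * (Qbar * Qbar * Q)) *ᵥ dtil := by
      rw [hw, Matrix.mulVec_mulVec]
    have hN : (1 - θ) * euclNorm v ≤ euclNorm ((Φ⁻¹ * (Qbar * Qbar * Q)) *ᵥ dtil) := by
      rw [← hΦw]
      linarith
    have hBn : 0 < matOpNorm Bplus := matOpNorm_pos' hB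
    have hub : euclNorm uhate ≤ γ * (matOpNorm Bplus * euclNorm v) := by
      rw [huhate, euclNorm_neg', euclNorm_smul', abs_of_pos hγ]
      have := euclNorm_mulVec_le' Bplus v
      nlinarith [euclNorm_nonneg' v]
    have hbound := hγ_bound hB
    have hbound' : γ * euclNorm ((Φ⁻¹ * (Qbar * Qbar * Q)) *ᵥ dtil) * matOpNorm Bplus
        < (1 - θ) * M := by
      rw [← mul_div_assoc] at hbound
      exact (lt_div_iff₀ hBn).mp hbound
    have hstep : (1 - θ) * (γ * (matOpNorm Bplus * euclNorm v)) < (1 - θ) * M := by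
      have h3 : γ * matOpNorm Bplus * ((1 - θ) * euclNorm v)
          ≤ γ * matOpNorm Bplus * euclNorm ((Φ⁻¹ * (Qbar * Qbar * Q)) *ᵥ dtil) :=
        mul_le_mul_of_nonneg_left hN (by positivity)
      calc (1 - θ) * (γ * (matOpNorm Bplus * euclNorm v))
          = γ * matOpNorm Bplus * ((1 - θ) * euclNorm v) := by ring
        _ ≤ γ * matOpNorm Bplus * euclNorm ((Φ⁻¹ * (Qbar * Qbar * Q)) *ᵥ dtil) := h3
        _ = γ * euclNorm ((Φ⁻¹ * (Qbar * Qbar * Q)) *ᵥ dtil) * matOpNorm Bplus := by ring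
        _ < (1 - θ) * M := hbound'
    have hfin : γ * (matOpNorm Bplus * euclNorm v) < M :=
      lt_of_mul_lt_mul_left hstep (by linarith)
    exact lt_of_le_of_lt hub hfin
end

section
/- (Lemma A.5, compactness of sublevel sets.) Let γ_c, γ_e ∈ ℝ with γ_e > 0, B ∈ ℝ^{n×m}, and let x_p^-, x_p^+ ∈ ℝ^n and x_e^-, x_e^+ ∈ ℝ^m satisfy componentwise x_p^- < 0 < x_p^+ and x_e^- < 0 < x_e^+. Define V : ℝ^n × ℝ^m × ℝ^n → ℝ by V(x̃, x̃_e, x̃_p) := ½‖x̃‖² + Σ_{i=1}^n ∫_0^{(x̃_p)_i} sat(y; (x_p^-)_i, (x_p^+)_i) dy + (1/γ_e²) Σ_{i=1}^m ∫_0^{−χ_i} sat(y; (x_e^-)_i, (x_e^+)_i) dy, where χ := γ_e x̃_e + γ_c Bᵀ x̃ (integrals of the scalar saturation function, oriented so that ∫_0^w of a function with the sign of y is nonnegative). Then V ≥ 0 everywhere, V(0,0,0) = 0, and for every D ≥ 0 the sublevel set 𝒬 := {(x̃, x̃_e, x̃_p) : V(x̃, x̃_e, x̃_p) ≤ D} is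 nonempty and compact. -/
open Matrix Filter

/- ### Auxiliary lemmas -/

lemma sat1_eq (l u : ℝ) (h : l ≤ u) : (fun y => sat1 y l u) = fun y => max l (min u y) := by
  funext y
  unfold sat1
  rcases le_or_gt y l with h1 | h1
  · rw [if_pos h1, min_eq_right (h1.trans h), max_eq_left h1]
  · rw [if_neg (not_le.mpr h1)]
    rcases le_or_gt u y with h2 | h2
    · rw [if_pos h2, min_eq_left h2, max_eq_right h]
    · rw [if_neg (not_le.mpr h2), min_eq_right h2.le, max_eq_right h1.le]

lemma continuous_sat1 (l u : ℝ) (h : l ≤ u) : Continuous fun y => sat1 y l u := by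
  rw [sat1_eq l u h]; fun_prop

lemma sat1_nonneg {l u : ℝ} (hl : l < 0) (hu : 0 < u) {y : ℝ} (hy : 0 ≤ y) :
    0 ≤ sat1 y l u := by
  unfold sat1
  rw [if_neg (by linarith : ¬ y ≤ l)]
  split
  · linarith
  · exact hy

lemma sat1_nonpos {l u : ℝ} (hl : l < 0) (hu : 0 < u) {y : ℝ} (hy : y ≤ 0) :
    sat1 y l u ≤ 0 := by
  unfold sat1
  split
  · linarith
  · rw [if_neg (by linarith : ¬ u ≤ y)]; exact hy

lemma satInt_nonneg {l u : ℝ} (hl : l < 0) (hu : 0 < u) (w : ℝ) :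
    0 ≤ ∫ y in (0:ℝ)..w, sat1 y l u := by
  rcases le_or_gt 0 w with h | h
  · exact intervalIntegral.integral_nonneg h (fun y hy => sat1_nonneg hl hu hy.1)
  · rw [intervalIntegral.integral_symm w 0]
    have h2 : 0 ≤ ∫ y in w..(0:ℝ), -(sat1 y l u) :=
      intervalIntegral.integral_nonneg h.le (fun y hy => neg_nonneg.mpr (sat1_nonpos hl hu hy.2))
    rw [intervalIntegral.integral_neg] at h2
    linarith

lemma continuous_satInt (l u : ℝ) (h : l ≤ u) :
    Continuous fun w => ∫ y in (0:ℝ)..w, sat1 y l u :=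
  intervalIntegral.continuous_primitive
    (fun a b => ((continuous_sat1 l u h).intervalIntegrable a b)) 0

lemma satInt_bound {l u D : ℝ} (hl : l < 0) (hu : 0 < u) (hD : 0 ≤ D) {w : ℝ}
    (h : (∫ y in (0:ℝ)..w, sat1 y l u) ≤ D) :
    |w| ≤ max (u + D / u) (-l + D / (-l)) := by
  have hlu : l ≤ u := by linarith
  have hint : ∀ a b : ℝ, IntervalIntegrable (fun y => sat1 y l u) MeasureTheory.volume a b :=
    fun a b => (continuous_sat1 l u hlu).intervalIntegrable a b
  have hla : (0:ℝ) < -l := by linarith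
  rw [abs_le]
  constructor
  · refine le_trans (neg_le_neg (le_max_right (u + D/u) (-l + D/(-l)))) ?_
    by_contra hc
    push_neg at hc
    have hDl : 0 ≤ D / (-l) := div_nonneg hD hla.le
    have hwl : w ≤ l := by linarith
    have hsplit : (∫ y in w..l, sat1 y l u) + (∫ y in l..(0:ℝ), sat1 y l u)
        = ∫ y in w..(0:ℝ), sat1 y l u :=
      intervalIntegral.integral_add_adjacent_intervals (hint w l) (hint l 0)
    have h1 : (∫ y in w..l, sat1 y l u) = (l - w) * l := by
      have hEq : Set.EqOn (fun y => sat1 y l u) (fun _ => l) (Set.uIcc w l) := by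
        intro y hy
        rw [Set.uIcc_of_le hwl] at hy
        simp only [sat1, if_pos hy.2]
      rw [intervalIntegral.integral_congr hEq, intervalIntegral.integral_const, smul_eq_mul]
    have h2 : (∫ y in l..(0:ℝ), sat1 y l u) ≤ 0 := by
      have h3 : 0 ≤ ∫ y in l..(0:ℝ), -(sat1 y l u) :=
        intervalIntegral.integral_nonneg hl.le
          (fun y hy => neg_nonneg.mpr (sat1_nonpos hl hu hy.2))
      rw [intervalIntegral.integral_neg] at h3
      linarith
    have hsym : (∫ y in (0:ℝ)..w, sat1 y l u) = -∫ y in w..(0:ℝ), sat1 y l u :=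
      intervalIntegral.integral_symm w 0
    have hgt : D < (l - w) * (-l) := by
      have hlt : D / (-l) < l - w := by linarith
      have := (div_lt_iff₀ hla).mp hlt
      linarith
    nlinarith [hsplit, h1, h2, hsym, h]
  · refine le_trans ?_ (le_max_left (u + D/u) (-l + D/(-l)))
    by_contra hc
    push_neg at hc
    have hDu : 0 ≤ D / u := div_nonneg hD hu.le
    have huw : u ≤ w := by linarith
    have hsplit : (∫ y in (0:ℝ)..u, sat1 y l u) + (∫ y in u..w, sat1 y l u)
        = ∫ y in (0:ℝ)..w, sat1 y l u :=
      intervalIntegral.integral_add_adjacent_intervals (hint 0 u) (hint u w)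
    have h1 : 0 ≤ ∫ y in (0:ℝ)..u, sat1 y l u :=
      intervalIntegral.integral_nonneg hu.le (fun y hy => sat1_nonneg hl hu hy.1)
    have h2 : (∫ y in u..w, sat1 y l u) = (w - u) * u := by
      have hEq : Set.EqOn (fun y => sat1 y l u) (fun _ => u) (Set.uIcc u w) := by
        intro y hy
        rw [Set.uIcc_of_le huw] at hy
        simp only [sat1, if_neg (by linarith [hy.1] : ¬ y ≤ l), if_pos hy.1]
      rw [intervalIntegral.integral_congr hEq, intervalIntegral.integral_const, smul_eq_mul]
    have hgt : D < (w - u) * u := by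
      have hlt : D / u < w - u := by linarith
      have := (div_lt_iff₀ hu).mp hlt
      linarith
    linarith [hsplit, h1, h2, h]

lemma euclNorm_eq {k : ℕ} (v : Fin k → ℝ) :
    euclNorm v = Real.sqrt (∑ i, (v i)^2) := by
  unfold euclNorm
  rw [EuclideanSpace.norm_eq]
  congr 1
  apply Finset.sum_congr rfl
  intro i _
  rw [show ((WithLp.equiv 2 (Fin k → ℝ)).symm v).ofLp i = v i from rfl, Real.norm_eq_abs, sq_abs]

lemma euclNorm_sq {k : ℕ} (v : Fin k → ℝ) :
    euclNorm v ^ 2 = ∑ i, (v i)^2 := by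
  rw [euclNorm_eq, Real.sq_sqrt (Finset.sum_nonneg fun i _ => sq_nonneg _)]

lemma continuous_euclNorm {k : ℕ} : Continuous (euclNorm (k := k)) := by
  have : euclNorm (k := k) = fun v => Real.sqrt (∑ i, (v i)^2) :=
    funext fun v => euclNorm_eq v
  rw [this]
  exact Real.continuous_sqrt.comp (continuous_finset_sum _ fun i _ => (continuous_apply i).pow 2)

/-- Lemma A.5: the Lyapunov function of the constrained closed loop is
nonnegative, vanishes at the origin, and has nonempty compact sublevel sets. -/
theorem lemmaA5_compact_sublevel_sets {n m : ℕ}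
    (γc γe : ℝ) (hγe : 0 < γe)
    (B : Matrix (Fin n) (Fin m) ℝ)
    (xpLo xpHi : Fin n → ℝ) (xeLo xeHi : Fin m → ℝ)
    (hp : ∀ i, xpLo i < 0 ∧ 0 < xpHi i)
    (he : ∀ i, xeLo i < 0 ∧ 0 < xeHi i)
    (V : (Fin n → ℝ) → (Fin m → ℝ) → (Fin n → ℝ) → ℝ)
    (hV : ∀ (xt : Fin n → ℝ) (xte : Fin m → ℝ) (xtp : Fin n → ℝ),
      V xt xte xtp =
        (1 / 2) * euclNorm xt ^ 2 +
        (∑ i, ∫ y in (0:ℝ)..(xtp i), sat1 y (xpLo i) (xpHi i)) +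
        (1 / γe ^ 2) *
          ∑ i, ∫ y in (0:ℝ)..(-((γe • xte + γc • (Bᵀ *ᵥ xt)) i)),
            sat1 y (xeLo i) (xeHi i)) :
    (∀ xt xte xtp, 0 ≤ V xt xte xtp) ∧
    V 0 0 0 = 0 ∧
    ∀ D : ℝ, 0 ≤ D →
      ({p : (Fin n → ℝ) × (Fin m → ℝ) × (Fin n → ℝ) |
        V p.1 p.2.1 p.2.2 ≤ D}).Nonempty ∧
      IsCompact {p : (Fin n → ℝ) × (Fin m → ℝ) × (Fin n → ℝ) |
        V p.1 p.2.1 p.2.2 ≤ D} := by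
  have hγe2 : (0:ℝ) < γe ^ 2 := by positivity
  have hlup : ∀ i, xpLo i ≤ xpHi i := fun i => le_of_lt ((hp i).1.trans (hp i).2)
  have hlue : ∀ i, xeLo i ≤ xeHi i := fun i => le_of_lt ((he i).1.trans (he i).2)
  -- nonnegativity
  have hnn : ∀ xt xte xtp, 0 ≤ V xt xte xtp := by
    intro xt xte xtp
    rw [hV]
    have h1 : 0 ≤ (1/2 : ℝ) * euclNorm xt ^ 2 := by positivity
    have h2 : 0 ≤ ∑ i, ∫ y in (0:ℝ)..(xtp i), sat1 y (xpLo i) (xpHi i) :=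
      Finset.sum_nonneg fun i _ => satInt_nonneg (hp i).1 (hp i).2 _
    have h3 : 0 ≤ (1/γe^2) *
        ∑ i, ∫ y in (0:ℝ)..(-((γe • xte + γc • (Bᵀ *ᵥ xt)) i)), sat1 y (xeLo i) (xeHi i) :=
      mul_nonneg (by positivity)
        (Finset.sum_nonneg fun i _ => satInt_nonneg (he i).1 (he i).2 _)
    linarith
  have h000 : V 0 0 0 = 0 := by
    rw [hV]
    simp [euclNorm_eq, Matrix.mulVec_zero, intervalIntegral.integral_same]
  refine ⟨hnn, h000, fun D hD => ?_⟩
  constructor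
  · exact ⟨(0, 0, 0), by simpa [Set.mem_setOf_eq, h000] using hD⟩
  · -- compactness
    -- continuity of V as a function of the triple
    have hVfun : (fun p : (Fin n → ℝ) × (Fin m → ℝ) × (Fin n → ℝ) => V p.1 p.2.1 p.2.2) =
        fun p =>
          (1 / 2) * euclNorm p.1 ^ 2 +
          (∑ i, ∫ y in (0:ℝ)..(p.2.2 i), sat1 y (xpLo i) (xpHi i)) +
          (1 / γe ^ 2) *
            ∑ i, ∫ y in (0:ℝ)..(-((γe • p.2.1 + γc • (Bᵀ *ᵥ p.1)) i)),
              sat1 y (xeLo i) (xeHi i) :=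
      funext fun p => hV p.1 p.2.1 p.2.2
    have hVc : Continuous fun p : (Fin n → ℝ) × (Fin m → ℝ) × (Fin n → ℝ) =>
        V p.1 p.2.1 p.2.2 := by
      rw [hVfun]
      refine Continuous.add (Continuous.add ?_ ?_) ?_
      · exact continuous_const.mul ((continuous_euclNorm.comp continuous_fst).pow 2)
      · refine continuous_finset_sum _ fun i _ => ?_
        exact (continuous_satInt _ _ (hlup i)).comp
          ((continuous_apply i).comp (continuous_snd.comp continuous_snd))
      · refine continuous_const.mul (continuous_finset_sum _ fun i _ => ?_)
        refine (continuous_satInt _ _ (hlue i)).comp ?_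
        simp only [Pi.add_apply, Pi.smul_apply, smul_eq_mul, Matrix.mulVec, dotProduct]
        fun_prop
    have hclosed : IsClosed {p : (Fin n → ℝ) × (Fin m → ℝ) × (Fin n → ℝ) |
        V p.1 p.2.1 p.2.2 ≤ D} := isClosed_le hVc continuous_const
    -- bounds
    set R1 : ℝ := Real.sqrt (2 * D) with hR1
    set bp : Fin n → ℝ := fun i =>
      max (xpHi i + D / (xpHi i)) (-(xpLo i) + D / (-(xpLo i))) with hbp
    set be : Fin m → ℝ := fun i =>
      max (xeHi i + (γe^2 * D) / (xeHi i)) (-(xeLo i) + (γe^2 * D) / (-(xeLo i))) with hbe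
    set re : Fin m → ℝ := fun i =>
      (be i + |γc| * ((∑ j, |Bᵀ i j|) * R1)) / γe with hre
    have key : ∀ (xt : Fin n → ℝ) (xte : Fin m → ℝ) (xtp : Fin n → ℝ),
        V xt xte xtp ≤ D →
        (∀ i, |xt i| ≤ R1) ∧ (∀ i, |xte i| ≤ re i) ∧ (∀ i, |xtp i| ≤ bp i) := by
      intro xt xte xtp hVp
      rw [hV] at hVp
      have h1 : 0 ≤ (1/2 : ℝ) * euclNorm xt ^ 2 := by positivity
      have h2nn : ∀ i, (0:ℝ) ≤ ∫ y in (0:ℝ)..(xtp i), sat1 y (xpLo i) (xpHi i) :=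
        fun i => satInt_nonneg (hp i).1 (hp i).2 _
      have h2 : 0 ≤ ∑ i, ∫ y in (0:ℝ)..(xtp i), sat1 y (xpLo i) (xpHi i) :=
        Finset.sum_nonneg fun i _ => h2nn i
      have h3nn : ∀ i, (0:ℝ) ≤
          ∫ y in (0:ℝ)..(-((γe • xte + γc • (Bᵀ *ᵥ xt)) i)), sat1 y (xeLo i) (xeHi i) :=
        fun i => satInt_nonneg (he i).1 (he i).2 _
      have h3s : 0 ≤ ∑ i,
          ∫ y in (0:ℝ)..(-((γe • xte + γc • (Bᵀ *ᵥ xt)) i)), sat1 y (xeLo i) (xeHi i) :=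
        Finset.sum_nonneg fun i _ => h3nn i
      have h3 : 0 ≤ (1/γe^2) * ∑ i,
          ∫ y in (0:ℝ)..(-((γe • xte + γc • (Bᵀ *ᵥ xt)) i)), sat1 y (xeLo i) (xeHi i) :=
        mul_nonneg (by positivity) h3s
      -- bound on xt
      have hxt : ∀ i, |xt i| ≤ R1 := by
        intro i
        have hsum : euclNorm xt ^ 2 ≤ 2 * D := by linarith
        rw [euclNorm_sq] at hsum
        have hi : (xt i)^2 ≤ ∑ j, (xt j)^2 :=
          Finset.single_le_sum (f := fun j => (xt j)^2) (fun j _ => sq_nonneg _)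
            (Finset.mem_univ i)
        calc |xt i| = Real.sqrt ((xt i)^2) := (Real.sqrt_sq_eq_abs _).symm
          _ ≤ R1 := Real.sqrt_le_sqrt (by linarith)
      -- bound on xtp
      have hxtp : ∀ i, |xtp i| ≤ bp i := by
        intro i
        have hile : (∫ y in (0:ℝ)..(xtp i), sat1 y (xpLo i) (xpHi i)) ≤ D := by
          have := Finset.single_le_sum
            (f := fun j => ∫ y in (0:ℝ)..(xtp j), sat1 y (xpLo j) (xpHi j))
            (fun j _ => h2nn j) (Finset.mem_univ i)
          linarith
        exact satInt_bound (hp i).1 (hp i).2 hD hile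
      -- bound on xte
      have hxte : ∀ i, |xte i| ≤ re i := by
        intro i
        have hsE : (∑ i, ∫ y in (0:ℝ)..(-((γe • xte + γc • (Bᵀ *ᵥ xt)) i)),
            sat1 y (xeLo i) (xeHi i)) ≤ γe^2 * D := by
          have hle : (1/γe^2) * ∑ i,
              ∫ y in (0:ℝ)..(-((γe • xte + γc • (Bᵀ *ᵥ xt)) i)), sat1 y (xeLo i) (xeHi i)
              ≤ D := by linarith
          have := mul_le_mul_of_nonneg_left hle hγe2.le
          have hne : γe^2 ≠ 0 := ne_of_gt hγe2
          calc (∑ i, ∫ y in (0:ℝ)..(-((γe • xte + γc • (Bᵀ *ᵥ xt)) i)),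
                sat1 y (xeLo i) (xeHi i))
              = γe^2 * ((1/γe^2) * ∑ i,
                ∫ y in (0:ℝ)..(-((γe • xte + γc • (Bᵀ *ᵥ xt)) i)),
                  sat1 y (xeLo i) (xeHi i)) := by field_simp
            _ ≤ γe^2 * D := this
        have hile : (∫ y in (0:ℝ)..(-((γe • xte + γc • (Bᵀ *ᵥ xt)) i)),
            sat1 y (xeLo i) (xeHi i)) ≤ γe^2 * D := by
          have := Finset.single_le_sum
            (f := fun j => ∫ y in (0:ℝ)..(-((γe • xte + γc • (Bᵀ *ᵥ xt)) j)),
              sat1 y (xeLo j) (xeHi j))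
            (fun j _ => h3nn j) (Finset.mem_univ i)
          linarith
        have hchi : |(γe • xte + γc • (Bᵀ *ᵥ xt)) i| ≤ be i := by
          have := satInt_bound (he i).1 (he i).2 (by positivity) hile
          rwa [abs_neg] at this
        have hBv : |(Bᵀ *ᵥ xt) i| ≤ (∑ j, |Bᵀ i j|) * R1 := by
          have heq : (Bᵀ *ᵥ xt) i = ∑ j, Bᵀ i j * xt j := by
            simp [Matrix.mulVec, dotProduct]
          rw [heq, Finset.sum_mul]
          refine (Finset.abs_sum_le_sum_abs _ _).trans (Finset.sum_le_sum fun j _ => ?_)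
          rw [abs_mul]
          exact mul_le_mul_of_nonneg_left (hxt j) (abs_nonneg _)
        have happ : (γe • xte + γc • (Bᵀ *ᵥ xt)) i = γe * xte i + γc * (Bᵀ *ᵥ xt) i := by
          simp
        have hγx : γe * |xte i| ≤ be i + |γc| * ((∑ j, |Bᵀ i j|) * R1) := by
          have h4 : |γe * xte i| ≤ |(γe • xte + γc • (Bᵀ *ᵥ xt)) i| + |γc * (Bᵀ *ᵥ xt) i| := by
            rw [happ]
            calc |γe * xte i| = |(γe * xte i + γc * (Bᵀ *ᵥ xt) i) - γc * (Bᵀ *ᵥ xt) i| := by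
                  ring_nf
              _ ≤ _ := abs_sub _ _
          rw [abs_mul, abs_of_pos hγe] at h4
          have h5 : |γc * (Bᵀ *ᵥ xt) i| ≤ |γc| * ((∑ j, |Bᵀ i j|) * R1) := by
            rw [abs_mul]
            exact mul_le_mul_of_nonneg_left hBv (abs_nonneg _)
          linarith
        rw [hre]
        rw [le_div_iff₀ hγe]
        linarith [hγx]
      exact ⟨hxt, hxte, hxtp⟩
    -- the compact box
    set K : Set ((Fin n → ℝ) × (Fin m → ℝ) × (Fin n → ℝ)) :=
      (Set.univ.pi fun i => Set.Icc (-R1) R1) ×ˢ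
        ((Set.univ.pi fun i => Set.Icc (-(re i)) (re i)) ×ˢ
          (Set.univ.pi fun i => Set.Icc (-(bp i)) (bp i))) with hK
    have hKc : IsCompact K :=
      (isCompact_univ_pi fun i => isCompact_Icc).prod
        ((isCompact_univ_pi fun i => isCompact_Icc).prod
          (isCompact_univ_pi fun i => isCompact_Icc))
    refine hKc.of_isClosed_subset hclosed ?_
    rintro ⟨xt, xte, xtp⟩ hmem
    obtain ⟨hxt, hxte, hxtp⟩ := key xt xte xtp hmem
    refine ⟨fun i _ => ?_, fun i _ => ?_, fun i _ => ?_⟩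
    · exact Set.mem_Icc.mpr (abs_le.mp (hxt i))
    · exact Set.mem_Icc.mpr (abs_le.mp (hxte i))
    · exact Set.mem_Icc.mpr (abs_le.mp (hxtp i))
end
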